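/- Let u : [0,∞)×ℝ³ → ℝ be C¹ and suppose that Σ_{j≥0} sup{ |∂_t u(t,x) − 1| + |∇_x u(t,x) + x/⟨x⟩| : t ≥ 0, 2^j ≤ ⟨x⟩ < 2^{j+1} } < ∞. Then Σ_{j≥0} sup{ (1+t+|x|)⁻¹ |u(t,x) + ⟨x⟩ − t| : t ≥ 0, 2^j ≤ ⟨x⟩ < 2^{j+1} } < ∞; that is, the normalized difference between u and the flat retarded time t − ⟨x⟩ lies in ℓ¹_r L^∞. -/

import Mathlib

noncomputable section

open MeasureTheory

/-- Euclidean `ℝ³`. -/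
abbrev E3 : Type := EuclideanSpace ℝ (Fin 3)

/-- The Japanese bracket `⟨x⟩ = (1+|x|²)^{1/2}`. -/
def jap (x : E3) : ℝ := Real.sqrt (1 + ‖x‖ ^ 2)

/-- The dyadic annulus `A_j = {2^j ≤ ⟨x⟩ < 2^{j+1}}`. -/
def Aj (j : ℕ) : Set E3 := {x | (2 : ℝ) ^ j ≤ jap x ∧ jap x < (2 : ℝ) ^ (j + 1)}

/-- The `L²` norm of `f` over the region `Q`. -/
def L2n (Q : Set E3) (f : E3 → ℝ) : ℝ := Real.sqrt (∫ x in Q, (f x) ^ 2)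

/-- `K` is a (smoothly bounded) domain: it is the sublevel set of a smooth
function whose differential does not vanish on the boundary. -/
def HasSmoothBoundary (K : Set E3) : Prop :=
  ∃ f : E3 → ℝ, ContDiff ℝ (⊤ : ℕ∞) f ∧ K = {x | f x ≤ 0} ∧
    ∀ x ∈ frontier K, fderiv ℝ f x ≠ 0

section Aux
variable (u : ℝ × E3 → ℝ)

lemma aux_time (hu : ContDiff ℝ 1 u) (t : ℝ) (x : E3) :
    HasDerivAt (fun s => u (s, x)) (fderiv ℝ u (t, x) (1, 0)) t := by
  have h1 : HasDerivAt (fun s : ℝ => (s, x)) ((1:ℝ), (0:E3)) t :=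
    (hasDerivAt_id t).prodMk (hasDerivAt_const t x)
  exact (((hu.differentiable one_ne_zero) (t, x)).hasFDerivAt).comp_hasDerivAt t h1

lemma inner_grad (hu : ContDiff ℝ 1 u) (t : ℝ) (y w : E3) :
    @inner ℝ _ _ (gradient (fun z => u (t, z)) y) w = fderiv ℝ u (t, y) (0, w) := by
  have h1 : HasFDerivAt (fun z : E3 => ((t:ℝ), z))
      (((0 : E3 →L[ℝ] ℝ)).prod (ContinuousLinearMap.id ℝ E3)) y :=
    (hasFDerivAt_const t y).prodMk (hasFDerivAt_id y)
  have h2 : HasFDerivAt (fun z : E3 => u (t, z))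
      ((fderiv ℝ u (t, y)).comp (((0 : E3 →L[ℝ] ℝ)).prod (ContinuousLinearMap.id ℝ E3))) y :=
    (((hu.differentiable one_ne_zero) (t, y)).hasFDerivAt).comp y h1
  calc @inner ℝ _ _ (gradient (fun z => u (t, z)) y) w
      = fderiv ℝ (fun z => u (t, z)) y w := InnerProductSpace.toDual_symm_apply
    _ = fderiv ℝ u (t, y) (0, w) := by rw [h2.fderiv]; simp

lemma sqrt_hasDeriv (s : ℝ) :
    HasDerivAt (fun r : ℝ => Real.sqrt (1 + r ^ 2)) (s / Real.sqrt (1 + s ^ 2)) s := by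
  have h : HasDerivAt (fun r : ℝ => 1 + r ^ 2) (2 * s) s := by
    simpa using ((hasDerivAt_pow 2 s).const_add 1)
  have h2 := h.sqrt (by positivity)
  convert h2 using 1
  rw [mul_comm (2:ℝ) (Real.sqrt _), ← div_div,
    mul_div_assoc, mul_div_cancel_left₀ _ (two_ne_zero)]

lemma jap_smul (s : ℝ) (e : E3) (he : ‖e‖ = 1) : jap (s • e) = Real.sqrt (1 + s ^ 2) := by
  unfold jap
  rw [norm_smul, he, mul_one, Real.norm_eq_abs, sq_abs]

lemma F_hasDeriv (hu : ContDiff ℝ 1 u) (e : E3) (s : ℝ) :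
    HasDerivAt (fun r => u (0, r • e) + Real.sqrt (1 + r ^ 2))
      (fderiv ℝ u (0, s • e) (0, e) + s / Real.sqrt (1 + s ^ 2)) s := by
  have h1 : HasDerivAt (fun r : ℝ => r • e) e s := by
    simpa using (hasDerivAt_id s).smul_const e
  have h2 : HasDerivAt (fun r : ℝ => ((0:ℝ), r • e)) ((0:ℝ), e) s :=
    (hasDerivAt_const s (0:ℝ)).prodMk h1
  exact ((((hu.differentiable one_ne_zero) ((0:ℝ), s • e)).hasFDerivAt).comp_hasDerivAt s h2).add
    (sqrt_hasDeriv s)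

lemma F_deriv_bound (hu : ContDiff ℝ 1 u) {e : E3} (he : ‖e‖ = 1) {s C : ℝ}
    (hb : ‖gradient (fun z => u (0, z)) (s • e) + (jap (s • e))⁻¹ • (s • e)‖ ≤ C) :
    |fderiv ℝ u (0, s • e) (0, e) + s / Real.sqrt (1 + s ^ 2)| ≤ C := by
  set y := s • e with hy
  have e1 : fderiv ℝ u (0, y) (0, e) = @inner ℝ _ _ (gradient (fun z => u (0, z)) y) e :=
    (inner_grad u hu 0 y e).symm
  have e2 : s / Real.sqrt (1 + s ^ 2) = @inner ℝ _ _ ((jap y)⁻¹ • y) e := by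
    rw [real_inner_smul_left, hy, real_inner_smul_left, real_inner_self_eq_norm_sq, he,
      jap_smul s e he]
    simp [div_eq_inv_mul]
  rw [e1, e2, ← inner_add_left]
  calc |@inner ℝ _ _ (gradient (fun z => u (0, z)) y + (jap y)⁻¹ • y) e|
      ≤ ‖gradient (fun z => u (0, z)) y + (jap y)⁻¹ • y‖ * ‖e‖ := abs_real_inner_le_norm _ _
    _ ≤ C := by rw [he, mul_one]; exact hb

end Aux

def rr (k : ℕ) : ℝ := Real.sqrt (4 ^ k - 1)

lemma one_le_four_pow (k : ℕ) : (1:ℝ) ≤ 4 ^ k := one_le_pow₀ (by norm_num)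

lemma four_pow_eq (k : ℕ) : ((2:ℝ) ^ k) ^ 2 = 4 ^ k := by
  rw [← pow_mul, mul_comm, pow_mul]; norm_num

lemma rr_nonneg (k : ℕ) : 0 ≤ rr k := Real.sqrt_nonneg _

lemma rr_sq (k : ℕ) : rr k ^ 2 = 4 ^ k - 1 :=
  Real.sq_sqrt (by linarith [one_le_four_pow k])

lemma rr_zero : rr 0 = 0 := by simp [rr]

lemma rr_le (k : ℕ) : rr k ≤ 2 ^ k := by
  rw [rr, Real.sqrt_le_left (by positivity)]
  rw [four_pow_eq]; linarith

lemma rr_mono (k : ℕ) : rr k ≤ rr (k + 1) := by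
  apply Real.sqrt_le_sqrt
  have h := one_le_four_pow k
  rw [pow_succ]; nlinarith

lemma lower_jap (k : ℕ) {s : ℝ} (h1 : rr k ≤ s) :
    (2:ℝ) ^ k ≤ Real.sqrt (1 + s ^ 2) := by
  rw [Real.le_sqrt' (by positivity), four_pow_eq]
  nlinarith [rr_sq k, rr_nonneg k]

lemma mem_Aj_of (k : ℕ) {s : ℝ} {e : E3} (he : ‖e‖ = 1) (h1 : rr k ≤ s)
    (h2 : Real.sqrt (1 + s ^ 2) < 2 ^ (k + 1)) : s • e ∈ Aj k := by
  refine ⟨?_, ?_⟩ <;> rw [jap_smul s e he]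
  · exact lower_jap k h1
  · exact h2

lemma sqrt_upper (k : ℕ) {s : ℝ} (hs0 : 0 ≤ s) (h : s ≤ rr (k + 1)) :
    Real.sqrt (1 + s ^ 2) ≤ 2 ^ (k + 1) := by
  rw [Real.sqrt_le_left (by positivity), four_pow_eq]
  nlinarith [rr_sq (k + 1), rr_nonneg (k + 1)]

lemma mvt_F (u : ℝ × E3 → ℝ) (hu : ContDiff ℝ 1 u) {e : E3} {a b C : ℝ} (hab : a ≤ b)
    (hC : ∀ s ∈ Set.Icc a b, |fderiv ℝ u (0, s • e) (0, e) + s / Real.sqrt (1 + s ^ 2)| ≤ C) :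
    |(u (0, b • e) + Real.sqrt (1 + b ^ 2)) - (u (0, a • e) + Real.sqrt (1 + a ^ 2))| ≤
      C * (b - a) := by
  have h := Convex.norm_image_sub_le_of_norm_hasDerivWithin_le
    (f := fun r => u (0, r • e) + Real.sqrt (1 + r ^ 2))
    (f' := fun s => fderiv ℝ u (0, s • e) (0, e) + s / Real.sqrt (1 + s ^ 2))
    (s := Set.Icc a b)
    (fun s _ => (F_hasDeriv u hu e s).hasDerivWithinAt)
    (fun s hs => by rw [Real.norm_eq_abs]; exact hC s hs)
    (convex_Icc a b) (Set.left_mem_Icc.2 hab) (Set.right_mem_Icc.2 hab)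
  rw [Real.norm_eq_abs, Real.norm_eq_abs, abs_of_nonneg (sub_nonneg.2 hab)] at h
  exact h

lemma tele (u : ℝ × E3 → ℝ) (hu : ContDiff ℝ 1 u) (d : ℕ → ℝ) (hd0 : ∀ k, 0 ≤ d k)
    (hbd : ∀ k : ℕ, ∀ y ∈ Aj k, ‖gradient (fun z => u (0, z)) y + (jap y)⁻¹ • y‖ ≤ d k)
    {e : E3} (he : ‖e‖ = 1) (j : ℕ) :
    |(u (0, rr j • e) + Real.sqrt (1 + rr j ^ 2)) -
        (u (0, (0:ℝ) • e) + Real.sqrt (1 + (0:ℝ) ^ 2))| ≤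
      ∑ k ∈ Finset.range j, 2 ^ (k + 1) * (d k + d (k + 1)) := by
  induction j with
  | zero => simp [rr_zero]
  | succ j ih =>
    have step : |(u (0, rr (j+1) • e) + Real.sqrt (1 + rr (j+1) ^ 2)) -
        (u (0, rr j • e) + Real.sqrt (1 + rr j ^ 2))| ≤
        (d j + d (j + 1)) * (rr (j + 1) - rr j) := by
      apply mvt_F u hu (rr_mono j)
      intro s hs
      have hs0 : 0 ≤ s := le_trans (rr_nonneg j) hs.1
      rcases lt_or_ge (Real.sqrt (1 + s ^ 2)) (2 ^ (j + 1)) with hlt | hge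
      · have hmem := mem_Aj_of j he hs.1 hlt
        exact le_trans (F_deriv_bound u hu he (hbd j _ hmem)) (by linarith [hd0 (j+1)])
      · have heq : Real.sqrt (1 + s ^ 2) = 2 ^ (j + 1) :=
          le_antisymm (sqrt_upper j hs0 hs.2) hge
        have hmem : s • e ∈ Aj (j + 1) := by
          have hpos : (0:ℝ) < 2 ^ (j + 1) := by positivity
          have h2 : (2:ℝ) ^ (j + 1 + 1) = 2 * 2 ^ (j + 1) := by ring
          constructor
          · rw [jap_smul s e he, heq]
          · rw [jap_smul s e he, heq, h2]; linarith
        exact le_trans (F_deriv_bound u hu he (hbd (j+1) _ hmem)) (by linarith [hd0 j])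
    have hlen : rr (j + 1) - rr j ≤ 2 ^ (j + 1) :=
      le_trans (by linarith [rr_nonneg j]) (rr_le (j + 1))
    have hCpos : 0 ≤ d j + d (j + 1) := by linarith [hd0 j, hd0 (j+1)]
    have step2 : |(u (0, rr (j+1) • e) + Real.sqrt (1 + rr (j+1) ^ 2)) -
        (u (0, rr j • e) + Real.sqrt (1 + rr j ^ 2))| ≤ 2 ^ (j + 1) * (d j + d (j + 1)) := by
      calc _ ≤ (d j + d (j + 1)) * (rr (j + 1) - rr j) := step
        _ ≤ (d j + d (j + 1)) * 2 ^ (j + 1) := by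
            apply mul_le_mul_of_nonneg_left hlen hCpos
        _ = 2 ^ (j + 1) * (d j + d (j + 1)) := by ring
    rw [Finset.sum_range_succ]
    calc |(u (0, rr (j+1) • e) + Real.sqrt (1 + rr (j+1) ^ 2)) -
        (u (0, (0:ℝ) • e) + Real.sqrt (1 + (0:ℝ) ^ 2))| ≤
        |(u (0, rr (j+1) • e) + Real.sqrt (1 + rr (j+1) ^ 2)) -
          (u (0, rr j • e) + Real.sqrt (1 + rr j ^ 2))| +
        |(u (0, rr j • e) + Real.sqrt (1 + rr j ^ 2)) -
          (u (0, (0:ℝ) • e) + Real.sqrt (1 + (0:ℝ) ^ 2))| := abs_sub_le _ _ _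
      _ ≤ 2 ^ (j + 1) * (d j + d (j + 1)) + ∑ k ∈ Finset.range j, 2 ^ (k + 1) * (d k + d (k + 1)) := add_le_add step2 ih
      _ = _ := by ring

/-- if `∂u - (1,-x/⟨x⟩)` lies in `ℓ¹_r L^∞` (uniformly in `t ≥ 0`),
then `(1+t+|x|)⁻¹(u + ⟨x⟩ - t)` lies in `ℓ¹_r L^∞` as well. -/
theorem optical_function_flat_comparison
    (u : ℝ × E3 → ℝ) (hu : ContDiff ℝ 1 u)
    (hyp : ∃ c : ℕ → ℝ, Summable c ∧ ∀ j : ℕ, ∀ t : ℝ, 0 ≤ t → ∀ x ∈ Aj j,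
      |deriv (fun s => u (s, x)) t - 1|
          + ‖gradient (fun y => u (t, y)) x + (jap x)⁻¹ • x‖ ≤ c j) :
    ∃ c' : ℕ → ℝ, Summable c' ∧ ∀ j : ℕ, ∀ t : ℝ, 0 ≤ t → ∀ x ∈ Aj j,
      (1 + t + ‖x‖)⁻¹ * |u (t, x) + jap x - t| ≤ c' j := by
  obtain ⟨c, hc, hbd⟩ := hyp
  set d : ℕ → ℝ := fun j => |c j| with hdd
  have hd : Summable d := summable_abs_iff.2 hc
  have hd0 : ∀ k, 0 ≤ d k := fun k => abs_nonneg _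
  have hbdT : ∀ j : ℕ, ∀ t : ℝ, 0 ≤ t → ∀ x ∈ Aj j,
      |deriv (fun s => u (s, x)) t - 1| ≤ d j := by
    intro j t ht x hx
    have h := hbd j t ht x hx
    have := norm_nonneg (gradient (fun y => u (t, y)) x + (jap x)⁻¹ • x)
    exact le_trans (by linarith) (le_abs_self _)
  have hbdS : ∀ j : ℕ, ∀ y ∈ Aj j,
      ‖gradient (fun z => u (0, z)) y + (jap y)⁻¹ • y‖ ≤ d j := by
    intro j y hy
    have h := hbd j 0 le_rfl y hy
    have := abs_nonneg (deriv (fun s => u (s, y)) 0 - 1)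
    exact le_trans (by linarith) (le_abs_self _)
  set B : ℝ := |u (0, 0) + 1| with hB
  set T : ℕ → ℝ := fun j => ∑ k ∈ Finset.range j, 2 ^ (k + 1) * (d k + d (k + 1)) with hT
  have hT0 : ∀ j, 0 ≤ T j := by
    intro j; apply Finset.sum_nonneg; intro k _
    have := hd0 k; have := hd0 (k + 1); positivity
  -- spatial bound
  have spatial : ∀ j : ℕ, ∀ x ∈ Aj j,
      |(u (0, x) + jap x) - (u (0, 0) + 1)| ≤ T j + 2 ^ (j + 1) * d j := by
    intro j x hx
    by_cases hx0 : x = (0 : E3)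
    · subst hx0
      have : jap (0 : E3) = 1 := by simp [jap]
      rw [this]
      simp only [sub_self, abs_zero]
      have := hT0 j; have := hd0 j; positivity
    · set R : ℝ := ‖x‖ with hR
      have hR0 : (0:ℝ) ≤ R := norm_nonneg x
      set e : E3 := ‖x‖⁻¹ • x with hee
      have he : ‖e‖ = 1 := norm_smul_inv_norm hx0
      have hxe : R • e = x := by
        rw [hee, smul_smul, mul_inv_cancel₀ (norm_ne_zero_iff.2 hx0), one_smul]
      have hjapx : jap x = Real.sqrt (1 + R ^ 2) := rfl
      have hRj : rr j ≤ R := by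
        rw [rr]
        rw [Real.sqrt_le_left hR0]
        have h1 : (2:ℝ) ^ j ≤ Real.sqrt (1 + R ^ 2) := hjapx ▸ hx.1
        rw [Real.le_sqrt' (by positivity)] at h1
        rw [four_pow_eq] at *
        linarith
      have midb : |(u (0, R • e) + Real.sqrt (1 + R ^ 2)) -
          (u (0, rr j • e) + Real.sqrt (1 + rr j ^ 2))| ≤ d j * (R - rr j) := by
        apply mvt_F u hu hRj
        intro s hs
        have hs0 : 0 ≤ s := le_trans (rr_nonneg j) hs.1
        have hup : Real.sqrt (1 + s ^ 2) < 2 ^ (j + 1) := by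
          have h1 : Real.sqrt (1 + s ^ 2) ≤ Real.sqrt (1 + R ^ 2) := by
            apply Real.sqrt_le_sqrt; nlinarith [hs.2]
          calc Real.sqrt (1 + s ^ 2) ≤ Real.sqrt (1 + R ^ 2) := h1
            _ < 2 ^ (j + 1) := hjapx ▸ hx.2
        exact F_deriv_bound u hu he (hbdS j _ (mem_Aj_of j he hs.1 hup))
      have hRle : R ≤ 2 ^ (j + 1) := by
        have h1 : R ≤ Real.sqrt (1 + R ^ 2) := Real.le_sqrt_of_sq_le (by nlinarith)
        linarith [hjapx ▸ hx.2]
      have midb2 : |(u (0, R • e) + Real.sqrt (1 + R ^ 2)) -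
          (u (0, rr j • e) + Real.sqrt (1 + rr j ^ 2))| ≤ 2 ^ (j + 1) * d j := by
        calc _ ≤ d j * (R - rr j) := midb
          _ ≤ d j * 2 ^ (j + 1) := by
              apply mul_le_mul_of_nonneg_left _ (hd0 j)
              linarith [rr_nonneg j]
          _ = 2 ^ (j + 1) * d j := by ring
      have tb := tele u hu d hd0 hbdS he j
      have hzero : ((0:ℝ)) • e = (0 : E3) := zero_smul _ _
      have hone : Real.sqrt (1 + (0:ℝ) ^ 2) = 1 := by norm_num
      rw [hzero, hone] at tb
      calc |(u (0, x) + jap x) - (u (0, 0) + 1)|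
          = |(u (0, R • e) + Real.sqrt (1 + R ^ 2)) - (u (0, 0) + 1)| := by rw [hxe, ← hjapx]
        _ ≤ |(u (0, R • e) + Real.sqrt (1 + R ^ 2)) -
              (u (0, rr j • e) + Real.sqrt (1 + rr j ^ 2))| +
            |(u (0, rr j • e) + Real.sqrt (1 + rr j ^ 2)) - (u (0, 0) + 1)| := abs_sub_le _ _ _
        _ ≤ 2 ^ (j + 1) * d j + T j := add_le_add midb2 tb
        _ = T j + 2 ^ (j + 1) * d j := by ring
  -- time bound
  have timeb : ∀ j : ℕ, ∀ t : ℝ, 0 ≤ t → ∀ x ∈ Aj j,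
      |(u (t, x) - t) - u (0, x)| ≤ d j * t := by
    intro j t ht x hx
    have h := Convex.norm_image_sub_le_of_norm_hasDerivWithin_le
      (f := fun s => u (s, x) - s)
      (f' := fun s => fderiv ℝ u (s, x) (1, 0) - 1)
      (s := Set.Icc 0 t)
      (fun s _ => ((aux_time u hu s x).sub (hasDerivAt_id s)).hasDerivWithinAt)
      (fun s hs => by
        show ‖fderiv ℝ u (s, x) (1, 0) - 1‖ ≤ d j
        rw [Real.norm_eq_abs, ← (aux_time u hu s x).deriv]
        exact hbdT j s hs.1 x hx)
      (convex_Icc 0 t) (Set.left_mem_Icc.2 ht) (Set.right_mem_Icc.2 ht)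
    simp only [sub_zero] at h
    rw [Real.norm_eq_abs, Real.norm_eq_abs, abs_of_nonneg ht] at h
    exact h
  -- the new sequence
  refine ⟨fun j => B * (1/2) ^ j +
      (∑ kl ∈ Finset.HasAntidiagonal.antidiagonal j, (2 * (d kl.1 + d (kl.1 + 1))) * (1/2) ^ kl.2) +
      3 * d j, ?_, ?_⟩
  · apply Summable.add
    apply Summable.add
    · exact (summable_geometric_of_lt_one (by norm_num) (by norm_num)).mul_left B
    · have hf : Summable (fun k => ‖2 * (d k + d (k + 1))‖) := by
        have h1 : Summable (fun k => 2 * (d k + d (k + 1))) :=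
          (hd.add ((summable_nat_add_iff 1).2 hd)).mul_left 2
        apply h1.congr
        intro k
        rw [Real.norm_of_nonneg (by have := hd0 k; have := hd0 (k+1); positivity)]
      have hg : Summable (fun m : ℕ => ‖(1/2 : ℝ) ^ m‖) := by
        have h1 : Summable (fun m : ℕ => (1/2 : ℝ) ^ m) :=
          summable_geometric_of_lt_one (by norm_num) (by norm_num)
        apply h1.congr
        intro m
        rw [Real.norm_of_nonneg (by positivity)]
      exact (summable_norm_sum_mul_antidiagonal_of_summable_norm hf hg).of_norm
    · exact hd.mul_left 3
  · intro j t ht x hx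
    have hW1 : (1:ℝ) ≤ 1 + t + ‖x‖ := by have := norm_nonneg x; linarith
    have hWpos : (0:ℝ) < 1 + t + ‖x‖ := by linarith
    have hjle : jap x ≤ 1 + ‖x‖ := by
      rw [jap, Real.sqrt_le_left (by positivity)]
      nlinarith [norm_nonneg x]
    have hW2 : (2:ℝ) ^ j ≤ 1 + t + ‖x‖ := by
      have := hx.1; linarith
    have h2jpos : (0:ℝ) < 2 ^ j := by positivity
    have key : |u (t, x) + jap x - t| ≤ d j * t + (T j + 2 ^ (j + 1) * d j) + B := by
      calc |u (t, x) + jap x - t|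
          = |((u (t, x) - t) - u (0, x)) + ((u (0, x) + jap x) - (u (0, 0) + 1)) +
              (u (0, 0) + 1)| := by ring_nf
        _ ≤ |((u (t, x) - t) - u (0, x)) + ((u (0, x) + jap x) - (u (0, 0) + 1))| +
              |u (0, 0) + 1| := abs_add_le _ _
        _ ≤ (|(u (t, x) - t) - u (0, x)| + |(u (0, x) + jap x) - (u (0, 0) + 1)|) + B :=
            add_le_add_left (abs_add_le _ _) B
        _ ≤ d j * t + (T j + 2 ^ (j + 1) * d j) + B :=
            add_le_add_left (add_le_add (timeb j t ht x hx) (spatial j x hx)) B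
    -- weighted estimate
    have hinv : (1 + t + ‖x‖)⁻¹ ≤ ((2:ℝ) ^ j)⁻¹ := by
      apply inv_anti₀ h2jpos hW2
    have htW : t * (1 + t + ‖x‖)⁻¹ ≤ 1 := by
      rw [mul_inv_le_iff₀ hWpos]
      have := norm_nonneg x
      linarith
    have habs : (0:ℝ) ≤ |u (t, x) + jap x - t| := abs_nonneg _
    have hTd : (T j + 2 ^ (j + 1) * d j + B) * (1 + t + ‖x‖)⁻¹ ≤
        (T j + 2 ^ (j + 1) * d j + B) * ((2:ℝ) ^ j)⁻¹ := by
      apply mul_le_mul_of_nonneg_left hinv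
      have := hT0 j; have := hd0 j; have : (0:ℝ) ≤ B := abs_nonneg _; positivity
    have main : (1 + t + ‖x‖)⁻¹ * |u (t, x) + jap x - t| ≤
        d j + (T j + 2 ^ (j + 1) * d j + B) * ((2:ℝ) ^ j)⁻¹ := by
      calc (1 + t + ‖x‖)⁻¹ * |u (t, x) + jap x - t|
          ≤ (1 + t + ‖x‖)⁻¹ * (d j * t + (T j + 2 ^ (j + 1) * d j) + B) := by
            apply mul_le_mul_of_nonneg_left key (by positivity)
        _ = d j * (t * (1 + t + ‖x‖)⁻¹) + (T j + 2 ^ (j + 1) * d j + B) * (1 + t + ‖x‖)⁻¹ := by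
            ring
        _ ≤ d j * 1 + (T j + 2 ^ (j + 1) * d j + B) * ((2:ℝ) ^ j)⁻¹ :=
            add_le_add (mul_le_mul_of_nonneg_left htW (hd0 j)) hTd
        _ = d j + (T j + 2 ^ (j + 1) * d j + B) * ((2:ℝ) ^ j)⁻¹ := by ring
    -- compare with c'
    have hanti : T j * ((2:ℝ) ^ j)⁻¹ ≤
        ∑ kl ∈ Finset.HasAntidiagonal.antidiagonal j, (2 * (d kl.1 + d (kl.1 + 1))) * (1/2) ^ kl.2 := by
      rw [Finset.Nat.sum_antidiagonal_eq_sum_range_succ_mk, hT, Finset.sum_mul]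
      have hterm : ∀ k ∈ Finset.range j,
          2 ^ (k + 1) * (d k + d (k + 1)) * ((2:ℝ) ^ j)⁻¹ =
          (2 * (d k + d (k + 1))) * (1/2) ^ (j - k) := by
        intro k hk
        have hkj : k ≤ j := le_of_lt (Finset.mem_range.1 hk)
        have h2 : (2:ℝ) ^ (j - k) * 2 ^ k = 2 ^ j := by
          rw [← pow_add]; congr 1; omega
        have hne1 : ((2:ℝ) ^ j) ≠ 0 := by positivity
        have hne2 : ((2:ℝ) ^ (j - k)) ≠ 0 := by positivity
        rw [one_div, inv_pow]
        field_simp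
        rw [← h2]; ring
      rw [Finset.sum_congr rfl hterm]
      apply Finset.sum_le_sum_of_subset_of_nonneg
        (Finset.range_subset_range.2 (Nat.le_succ j))
      intro i _ _
      have := hd0 i; have := hd0 (i + 1); positivity
    have hpow : ((2:ℝ) ^ j)⁻¹ = (1/2) ^ j := by
      rw [one_div, inv_pow]
    have hBle : B * ((2:ℝ) ^ j)⁻¹ = B * (1/2) ^ j := by rw [hpow]
    have h2d : (2:ℝ) ^ (j + 1) * d j * ((2:ℝ) ^ j)⁻¹ = 2 * d j := by
      rw [pow_succ]
      field_simp
    calc (1 + t + ‖x‖)⁻¹ * |u (t, x) + jap x - t|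
        ≤ d j + (T j + 2 ^ (j + 1) * d j + B) * ((2:ℝ) ^ j)⁻¹ := main
      _ = d j + T j * ((2:ℝ) ^ j)⁻¹ + 2 ^ (j + 1) * d j * ((2:ℝ) ^ j)⁻¹ +
            B * ((2:ℝ) ^ j)⁻¹ := by ring
      _ = d j + T j * ((2:ℝ) ^ j)⁻¹ + 2 * d j + B * (1/2) ^ j := by rw [h2d, hBle]
      _ ≤ d j + (∑ kl ∈ Finset.HasAntidiagonal.antidiagonal j, (2 * (d kl.1 + d (kl.1 + 1))) * (1/2) ^ kl.2) +
            2 * d j + B * (1/2) ^ j := by linarith [hanti]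
      _ = B * (1/2) ^ j +
            (∑ kl ∈ Finset.HasAntidiagonal.antidiagonal j, (2 * (d kl.1 + d (kl.1 + 1))) * (1/2) ^ kl.2) +
            3 * d j := by ring
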